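/- Let M be a d×d Metzler matrix. There exists a nonzero v ∈ ℝ^d_{≥0} with (vM)_m > 0 for all m ∈ supp(v) if and only if some principal submatrix of M admits an increasing direction, i.e., there exist nonempty I ⊆ [d] and w ∈ ℝ^{|I|}_{>0} with wM^I ∈ ℝ^{|I|}_{>0}. -/
import Mathlib


open Matrix BigOperators

/-- Existence of a nonzero nonnegative `v` with `(vM)_m > 0` on its support is equivalent
to some principal submatrix of `M` having an increasing direction. -/
theorem exists_v_iff_submatrix_increasing
    (d : ℕ) (M : Matrix (Fin d) (Fin d) ℝ)
    (hMet : ∀ i j, i ≠ j → 0 ≤ M i j) :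
    (∃ v : Fin d → ℝ, v ≠ 0 ∧ (∀ i, 0 ≤ v i) ∧ ∀ m, v m ≠ 0 → 0 < (v ᵥ* M) m) ↔
    (∃ I : Finset (Fin d), I.Nonempty ∧
      ∃ w : {x // x ∈ I} → ℝ, (∀ i, 0 < w i) ∧
        ∀ j, 0 < (w ᵥ* M.submatrix (Subtype.val : {x // x ∈ I} → Fin d) (Subtype.val : {x // x ∈ I} → Fin d)) j) := by
  constructor
  · rintro ⟨v, hv0, hvnn, hvpos⟩
    set I : Finset (Fin d) := Finset.univ.filter (fun i => v i ≠ 0) with hI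
    have hmem : ∀ i : Fin d, i ∈ I ↔ v i ≠ 0 := by
      intro i; simp [hI]
    refine ⟨I, ?_, fun i => v i.1, ?_, ?_⟩
    · obtain ⟨m, hm⟩ := Function.ne_iff.mp hv0
      exact ⟨m, (hmem m).mpr hm⟩
    · intro i
      exact lt_of_le_of_ne (hvnn i.1) (Ne.symm ((hmem i.1).mp i.2))
    · intro j
      have key : (fun i : {x // x ∈ I} => v i.1) ᵥ* M.submatrix
          (Subtype.val : {x // x ∈ I} → Fin d) (Subtype.val : {x // x ∈ I} → Fin d) = fun j => (v ᵥ* M) j.1 := by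
        funext j
        simp only [Matrix.vecMul, dotProduct, Matrix.submatrix_apply]
        rw [Finset.sum_coe_sort I (fun i => v i * M i j.1)]
        rw [Finset.sum_subset (Finset.subset_univ I)]
        intro x _ hx
        have : v x = 0 := by
          by_contra h
          exact hx ((hmem x).mpr h)
        simp [this]
      rw [key]
      exact hvpos j.1 ((hmem j.1).mp j.2)
  · rintro ⟨I, hIne, w, hwpos, hwMI⟩
    classical
    refine ⟨fun i => if h : i ∈ I then w ⟨i, h⟩ else 0, ?_, ?_, ?_⟩
    · obtain ⟨m, hm⟩ := hIne
      intro h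
      have := congrFun h m
      simp [hm] at this
      exact (hwpos ⟨m, hm⟩).ne' this
    · intro i
      by_cases h : i ∈ I
      · simp [h, (hwpos ⟨i, h⟩).le]
      · simp [h]
    · intro m hm
      have hmI : m ∈ I := by
        by_contra h; simp [h] at hm
      have key : ((fun i => if h : i ∈ I then w ⟨i, h⟩ else 0) ᵥ* M) m
          = (w ᵥ* M.submatrix (Subtype.val : {x // x ∈ I} → Fin d) (Subtype.val : {x // x ∈ I} → Fin d)) ⟨m, hmI⟩ := by
        simp only [Matrix.vecMul, dotProduct, Matrix.submatrix_apply]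
        have hc : ∀ x : {x // x ∈ I}, w x * M x.1 m
            = (if h : x.1 ∈ I then w ⟨x.1, h⟩ else 0) * M x.1 m := by
          intro x; simp [x.2]
        rw [Finset.sum_congr rfl (fun x _ => hc x),
          Finset.sum_coe_sort I (fun i => (if h : i ∈ I then w ⟨i, h⟩ else 0) * M i m)]
        exact (Finset.sum_subset (Finset.subset_univ I) (fun x _ hx => by simp [hx])).symm
      rw [key]
      exact hwMI ⟨m, hmI⟩
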